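/- arXiv:1908.01971 — 3 statements merged into one kernel-verified Lean document; each statement's English description precedes it below -/
import Mathlib

section
/- Let J_1,…,J_n : ℝ^N → [0,1] be functions with pairwise disjoint supports, and define J_{n+1} := √(1 − Σ_{i=1}^{n} J_i²). Let x ∈ ℝ^N be a point at which each J_1,…,J_n is differentiable and J_i(x)² < 1 for every i ∈ {1,…,n}. Then J_{n+1} is differentiable at x and Σ_{i=1}^{n+1} |∇J_i(x)|² = Σ_{i=1}^{n} |∇J_i(x)|²/(1 − J_i(x)²). -/
noncomputable section

/-- Property d) of the partitions of unity used in the IMS method: if `J₁,…,Jₙ` take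
values in `[0,1]`, have pairwise disjoint supports, and `J_{n+1} = √(1 - ∑ᵢ Jᵢ²)`,
then at every point `x` where all the `Jᵢ` are differentiable and `Jᵢ(x)² < 1`,
`J_{n+1}` is differentiable and
`∑_{i=1}^{n+1} |∇Jᵢ(x)|² = ∑_{i=1}^{n} |∇Jᵢ(x)|²/(1 - Jᵢ(x)²)`. -/
theorem partition_last_gradient_identity {N n : ℕ}
    (J : Fin n → EuclideanSpace ℝ (Fin N) → ℝ)
    (hrange : ∀ i x, J i x ∈ Set.Icc (0 : ℝ) 1)
    (hdisj : ∀ i j, i ≠ j → Disjoint (Function.support (J i)) (Function.support (J j)))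
    (x : EuclideanSpace ℝ (Fin N))
    (hdiff : ∀ i, DifferentiableAt ℝ (J i) x)
    (hlt : ∀ i, J i x ^ 2 < 1) :
    DifferentiableAt ℝ (fun y => Real.sqrt (1 - ∑ i, J i y ^ 2)) x ∧
    (∑ i, ‖gradient (J i) x‖ ^ 2)
        + ‖gradient (fun y => Real.sqrt (1 - ∑ i, J i y ^ 2)) x‖ ^ 2
      = ∑ i, ‖gradient (J i) x‖ ^ 2 / (1 - J i x ^ 2) := by
  classical
  have hmul : ∀ i j, i ≠ j → J i x * J j x = 0 := by
    intro i j hij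
    by_contra h
    have hi : x ∈ Function.support (J i) := fun h0 => h (by simp [h0])
    have hj : x ∈ Function.support (J j) := fun h0 => h (by simp [h0])
    exact Set.disjoint_left.mp (hdisj i j hij) hi hj
  set S : ℝ := ∑ i, J i x ^ 2 with hSdef
  have hSlt : S < 1 := by
    by_cases h : ∀ i, J i x = 0
    · simp only [hSdef]
      have : ∑ i, J i x ^ 2 = 0 := by simp [h]
      rw [this]; norm_num
    · push_neg at h; obtain ⟨k, hk⟩ := h
      have : S = J k x ^ 2 := by
        rw [hSdef]
        apply Finset.sum_eq_single k
        · intro j _ hjk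
          have := hmul j k hjk
          have : J j x = 0 := by
            rcases mul_eq_zero.mp this with h' | h'
            · exact h'
            · exact absurd h' hk
          simp [this]
        · intro hmem; exact absurd (Finset.mem_univ k) hmem
      rw [this]; exact hlt k
  have hSpos : 0 < 1 - S := by linarith
  have hsqrt_pos : 0 < Real.sqrt (1 - S) := Real.sqrt_pos.mpr hSpos
  -- gradients
  set g : Fin n → EuclideanSpace ℝ (Fin N) := fun i => gradient (J i) x with hgdef
  have hgrad : ∀ i, HasGradientAt (J i) (g i) x := fun i => (hdiff i).hasGradientAt
  set L : Fin n → (EuclideanSpace ℝ (Fin N) →L[ℝ] ℝ) :=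
    fun i => InnerProductSpace.toDual ℝ _ (g i) with hLdef
  have hFD : ∀ i, HasFDerivAt (J i) (L i) x := fun i => (hgrad i).hasFDerivAt
  -- derivative of S(y)
  have hSder : HasFDerivAt (fun y => ∑ i, J i y ^ 2)
      (∑ i, (2 * J i x) • L i) x := by
    refine HasFDerivAt.fun_sum (A := fun i y => J i y ^ 2) ?_
    intro i _
    have hm : HasFDerivAt (fun y => J i y ^ 2) (J i x • L i + J i x • L i) x := by
      simpa [pow_two] using (hFD i).fun_mul (hFD i)
    rw [two_mul, add_smul]
    exact hm
  have h1S : HasFDerivAt (fun y => 1 - ∑ i, J i y ^ 2)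
      (-(∑ i, (2 * J i x) • L i)) x := hSder.const_sub 1
  have hsq : HasDerivAt Real.sqrt (1 / (2 * Real.sqrt (1 - S))) (1 - S) :=
    Real.hasDerivAt_sqrt (ne_of_gt hSpos)
  have hfD : HasFDerivAt (fun y => Real.sqrt (1 - ∑ i, J i y ^ 2))
      ((1 / (2 * Real.sqrt (1 - S))) • (-(∑ i, (2 * J i x) • L i))) x := by
    have := hsq.comp_hasFDerivAt x h1S
    exact this
  set G : EuclideanSpace ℝ (Fin N) :=
    (-(Real.sqrt (1 - S))⁻¹) • ∑ i, J i x • g i with hGdef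
  have hGd : HasGradientAt (fun y => Real.sqrt (1 - ∑ i, J i y ^ 2)) G x := by
    rw [hasGradientAt_iff_hasFDerivAt]
    have h2 : Real.sqrt (1 - S) ≠ 0 := ne_of_gt hsqrt_pos
    have hEq : (InnerProductSpace.toDual ℝ (EuclideanSpace ℝ (Fin N))) G
        = (1 / (2 * Real.sqrt (1 - S))) • (-(∑ i, (2 * J i x) • L i)) := by
      apply ContinuousLinearMap.ext
      intro v
      simp only [hGdef, hLdef, map_smul, map_sum, ContinuousLinearMap.smul_apply,
        ContinuousLinearMap.sum_apply, ContinuousLinearMap.neg_apply, smul_eq_mul]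
      rw [mul_neg, Finset.mul_sum, Finset.mul_sum, ← Finset.sum_neg_distrib]
      refine Finset.sum_congr rfl fun i _ => ?_
      field_simp
    rw [hEq]
    exact hfD
  have hdiff2 : DifferentiableAt ℝ (fun y => Real.sqrt (1 - ∑ i, J i y ^ 2)) x :=
    hGd.differentiableAt
  refine ⟨hdiff2, ?_⟩
  rw [hGd.gradient]
  -- norm of G squared
  have hVnorm : ‖∑ i, J i x • g i‖ ^ 2 = ∑ i, J i x ^ 2 * ‖g i‖ ^ 2 := by
    rw [← real_inner_self_eq_norm_sq]
    rw [sum_inner]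
    refine Finset.sum_congr rfl fun i _ => ?_
    rw [inner_sum]
    rw [Finset.sum_eq_single i]
    · rw [real_inner_smul_left, real_inner_smul_right, real_inner_self_eq_norm_sq]; ring
    · intro j _ hji
      rw [real_inner_smul_left, real_inner_smul_right, ← mul_assoc,
        hmul i j (Ne.symm hji), zero_mul]
    · simp
  have hGnorm : ‖G‖ ^ 2 = (1 - S)⁻¹ * ∑ i, J i x ^ 2 * ‖g i‖ ^ 2 := by
    rw [hGdef, norm_smul, mul_pow, ← hVnorm]
    congr 1
    rw [Real.norm_eq_abs, abs_neg, abs_inv, abs_of_pos hsqrt_pos]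
    rw [inv_pow, Real.sq_sqrt (le_of_lt hSpos)]
  rw [hGnorm, Finset.mul_sum, ← Finset.sum_add_distrib]
  refine Finset.sum_congr rfl fun i _ => ?_
  have hkey : J i x ^ 2 * S = (J i x ^ 2) ^ 2 := by
    rw [hSdef, Finset.mul_sum]
    rw [Finset.sum_eq_single i]
    · ring
    · intro j _ hji
      have := hmul i j (Ne.symm hji)
      have : J i x ^ 2 * J j x ^ 2 = (J i x * J j x) ^ 2 := by ring
      rw [this, hmul i j (Ne.symm hji)]; norm_num
    · simp
  have h1 : (1 : ℝ) - S ≠ 0 := ne_of_gt hSpos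
  have h2 : (1 : ℝ) - J i x ^ 2 ≠ 0 := ne_of_gt (by linarith [hlt i])
  field_simp
  ring_nf
  nlinarith [hkey, sq_nonneg (‖g i‖)]

end
end

section
/- Let N ≥ 3, n ≥ 1, let a_1,…,a_n ∈ ℝ^N be distinct points, let k_2 > 2−N, and let μ : ℝ^N → (0,∞) be a locally integrable weight function, positive almost everywhere, satisfying hypothesis H3 at some pole a_i: sup{ δ ∈ ℝ : ∫_K |x−a_i|^{−δ} dμ < ∞ for every compact K ⊂ ℝ^N } = N + k_2. Then for every c > c_o(N+k_2) := ((N+k_2−2)/2)² and every λ ∈ ℝ, there exists a compactly supported Lipschitz function φ : ℝ^N → ℝ with 0 < ∫_{ℝ^N} φ² dμ < ∞ such that ∫_{ℝ^N} |∇φ|² dμ − c·Σ_{j=1}^n ∫_{ℝ^N} φ²/|x−a_j|² dμ < λ·∫_{ℝ^N} φ² dμ. In particular, the multipolar Hardy inequality c·Σ_{j=1}^n ∫ φ²/|x−a_j|² dμ ≤ ∫ |∇φ|² dμ + K·∫ φ² dμ fails for every constant K when c > c_o(N+k_2). -/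
open MeasureTheory Filter Metric Set NNReal ENNReal Topology

noncomputable section

namespace MHCO

lemma lipschitzOnWith_congr {α β : Type*} [PseudoEMetricSpace α] [PseudoEMetricSpace β]
    {K : ℝ≥0} {f g : α → β} {s : Set α} (hf : LipschitzOnWith K f s)
    (h : Set.EqOn g f s) : LipschitzOnWith K g s := fun x hx y hy => by
  rw [h hx, h hy]; exact hf hx hy

lemma lipOn_rpow {m η : ℝ} (hm : 0 < m) (hη : η ≤ 1) :
    LipschitzOnWith (Real.toNNReal (|η| * m ^ (η - 1))) (fun t : ℝ => t ^ η) (Set.Ici m) := by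
  apply (convex_Ici m).lipschitzOnWith_of_nnnorm_hasDerivWithin_le
    (f' := fun t => η * t ^ (η - 1))
  · intro t ht
    exact (Real.hasDerivAt_rpow_const (Or.inl (ne_of_gt (lt_of_lt_of_le hm ht)))).hasDerivWithinAt
  · intro t ht
    rw [← NNReal.coe_le_coe, coe_nnnorm, Real.coe_toNNReal _ (by positivity)]
    rw [Real.norm_eq_abs, abs_mul, abs_of_nonneg (Real.rpow_nonneg (le_trans hm.le ht) _)]
    exact mul_le_mul_of_nonneg_left
      (Real.rpow_le_rpow_of_nonpos hm ht (by linarith)) (abs_nonneg η)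

lemma lipOn_mul {α : Type*} [PseudoMetricSpace α] {f g : α → ℝ} {s : Set α} {Kf Kg : ℝ≥0}
    {A B : ℝ} (hf : LipschitzOnWith Kf f s) (hg : LipschitzOnWith Kg g s)
    (hA : ∀ x ∈ s, |f x| ≤ A) (hB : ∀ x ∈ s, |g x| ≤ B) :
    LipschitzOnWith (Real.toNNReal (A * Kg + B * Kf)) (fun x => f x * g x) s := by
  apply LipschitzOnWith.of_dist_le_mul
  intro x hx y hy
  have hd1 := hf.dist_le_mul x hx y hy
  have hd2 := hg.dist_le_mul x hx y hy
  rw [Real.dist_eq] at hd1 hd2 ⊢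
  have hA0 : 0 ≤ A := le_trans (abs_nonneg _) (hA x hx)
  have hB0 : 0 ≤ B := le_trans (abs_nonneg _) (hB y hy)
  have key : |f x * g x - f y * g y| ≤ A * (Kg * dist x y) + B * (Kf * dist x y) := by
    have h : f x * g x - f y * g y = f x * (g x - g y) + g y * (f x - f y) := by ring
    rw [h]
    refine le_trans (abs_add_le _ _) (add_le_add ?_ ?_)
    · rw [abs_mul]
      exact mul_le_mul (hA x hx) hd2 (abs_nonneg _) hA0
    · rw [abs_mul]
      exact mul_le_mul (hB y hy) hd1 (abs_nonneg _) hB0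
  refine key.trans ?_
  have h2 : A * (↑Kg * dist x y) + B * (↑Kf * dist x y) = (A * Kg + B * Kf) * dist x y := by ring
  rw [h2]
  exact mul_le_mul_of_nonneg_right (Real.le_coe_toNNReal _) dist_nonneg

lemma norm_gradient_eq {F : Type*} [NormedAddCommGroup F] [InnerProductSpace ℝ F]
    [CompleteSpace F] (f : F → ℝ) (x : F) : ‖gradient f x‖ = ‖fderiv ℝ f x‖ :=
  (InnerProductSpace.toDual ℝ F).symm.norm_map (fderiv ℝ f x)

lemma lip_shift_norm {F : Type*} [NormedAddCommGroup F] (t : ℝ) (p : F) :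
    LipschitzWith 1 (fun x : F => t + ‖x - p‖) := by
  apply LipschitzWith.of_dist_le_mul
  intro x y
  rw [Real.dist_eq, NNReal.coe_one, one_mul, add_sub_add_left_eq_sub, dist_eq_norm]
  simpa [sub_sub_sub_cancel_right] using abs_norm_sub_norm_le (x - p) (y - p)

lemma lip_cut {F : Type*} [NormedAddCommGroup F] {ρ : ℝ} (hρ : 0 < ρ) (p : F) :
    LipschitzWith (Real.toNNReal ρ⁻¹) (fun x : F => min 1 (max 0 (2 - ‖x - p‖ / ρ))) := by
  apply LipschitzWith.of_dist_le_mul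
  intro x y
  rw [Real.dist_eq, Real.coe_toNNReal _ (by positivity)]
  calc |min 1 (max 0 (2 - ‖x - p‖ / ρ)) - min 1 (max 0 (2 - ‖y - p‖ / ρ))|
      ≤ max |(1:ℝ) - 1| |max 0 (2 - ‖x - p‖ / ρ) - max 0 (2 - ‖y - p‖ / ρ)| :=
        abs_min_sub_min_le_max _ _ _ _
    _ ≤ |(2 - ‖x - p‖ / ρ) - (2 - ‖y - p‖ / ρ)| := by
        rw [max_comm (0:ℝ) (2 - ‖x - p‖ / ρ), max_comm (0:ℝ) (2 - ‖y - p‖ / ρ)]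
        exact max_le (by simp) (abs_max_sub_max_le_abs _ _ _)
    _ = |‖x - p‖ - ‖y - p‖| / ρ := by
        rw [show (2 - ‖x - p‖ / ρ) - (2 - ‖y - p‖ / ρ) = (‖y - p‖ - ‖x - p‖) / ρ by ring,
          abs_div, abs_of_pos hρ, abs_sub_comm]
    _ ≤ ρ⁻¹ * dist x y := by
        rw [div_eq_inv_mul]
        refine mul_le_mul_of_nonneg_left ?_ (by positivity)
        rw [dist_eq_norm]
        simpa [sub_sub_sub_cancel_right] using abs_norm_sub_norm_le (x - p) (y - p)

lemma integrable_of_bdd_compact {F : Type*} [MeasurableSpace F] {ν : Measure F} {f : F → ℝ}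
    {K : Set F} (hK : MeasurableSet K) (hν : ν K ≠ ⊤) (hm : AEStronglyMeasurable f ν) (M : ℝ)
    (hbd : ∀ x, |f x| ≤ M) (hsupp : ∀ x ∉ K, f x = 0) : Integrable f ν := by
  refine Integrable.mono' (g := K.indicator fun _ => M) ?_ hm (ae_of_all _ ?_)
  · rw [integrable_indicator_iff hK]
    exact integrableOn_const hν
  · intro x
    by_cases hx : x ∈ K
    · simpa [Set.indicator_of_mem hx, Real.norm_eq_abs] using hbd x
    · simp [Set.indicator_of_notMem hx, hsupp x hx, Real.norm_eq_abs]

lemma integrable_of_lintegral_ne_top {F : Type*} [MeasurableSpace F] {ν : Measure F} {f : F → ℝ}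
    (hm : AEStronglyMeasurable f ν) (h0 : 0 ≤ᵐ[ν] f)
    (hfin : ∫⁻ x, ENNReal.ofReal (f x) ∂ν ≠ ⊤) : Integrable f ν :=
  ⟨hm, (hasFiniteIntegral_iff_ofReal h0).2 hfin.lt_top⟩

lemma measurable_rpow_norm {E : Type*} [NormedAddCommGroup E] [MeasurableSpace E]
    [OpensMeasurableSpace E] (p : E) (τ : ℝ) :
    Measurable (fun x : E => ‖x - p‖ ^ τ) := by
  have h : (fun x : E => ‖x - p‖ ^ τ)
      = fun x => ((ENNReal.ofReal ‖x - p‖) ^ τ).toReal := by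
    funext x
    rw [← ENNReal.toReal_rpow, ENNReal.toReal_ofReal (norm_nonneg _)]
  rw [h]
  exact ENNReal.measurable_toReal.comp ((ENNReal.continuous_rpow_const.comp
    (ENNReal.continuous_ofReal.comp ((continuous_id.sub continuous_const).norm))).measurable)

/-- Downward closedness of integrability of `‖x-p‖^(-δ)` on compact sets. -/
lemma integrableOn_rpow_of_le {E : Type*} [NormedAddCommGroup E] [MeasurableSpace E]
    [OpensMeasurableSpace E] {ν : Measure E} {p : E} {δ δ₀ : ℝ} (hδ0 : 0 < δ) (hδδ₀ : δ ≤ δ₀)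
    {K : Set E} (hK : MeasurableSet K) (hKν : ν K ≠ ⊤)
    (h₀ : IntegrableOn (fun x => ‖x - p‖ ^ (-δ₀)) K ν) :
    IntegrableOn (fun x => ‖x - p‖ ^ (-δ)) K ν := by
  refine Integrable.mono' (g := fun x => ‖x - p‖ ^ (-δ₀) + 1)
    (h₀.add (integrableOn_const hKν))
    ((measurable_rpow_norm p (-δ)).aestronglyMeasurable) (ae_of_all _ ?_)
  intro x
  rw [Real.norm_eq_abs, abs_of_nonneg (Real.rpow_nonneg (norm_nonneg _) _)]
  rcases le_or_gt ‖x - p‖ 1 with h1 | h1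
  · rcases eq_or_lt_of_le (norm_nonneg (x - p)) with h0 | h0
    · rw [← h0, Real.zero_rpow (by linarith), Real.zero_rpow (by linarith)]
      norm_num
    · have := Real.rpow_le_rpow_of_exponent_ge h0 h1 (by linarith : -δ₀ ≤ -δ)
      have h2 : (0:ℝ) ≤ ‖x - p‖ ^ (-δ₀) := Real.rpow_nonneg (norm_nonneg _) _
      calc ‖x - p‖ ^ (-δ) ≤ ‖x - p‖ ^ (-δ₀) := this
        _ ≤ ‖x - p‖ ^ (-δ₀) + 1 := by linarith
  · have h2 : ‖x - p‖ ^ (-δ) ≤ 1 :=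
      Real.rpow_le_one_of_one_le_of_nonpos h1.le (by linarith)
    have h3 : (0:ℝ) ≤ ‖x - p‖ ^ (-δ₀) := Real.rpow_nonneg (norm_nonneg _) _
    calc ‖x - p‖ ^ (-δ) ≤ 1 := h2
      _ ≤ ‖x - p‖ ^ (-δ₀) + 1 := by linarith

/-- If `‖x-p‖^τ` (τ ≤ 0) fails to be integrable on some compact set, it fails on the
closed ball of radius ρ around p. -/
lemma notIntegrableOn_closedBall {E : Type*} [NormedAddCommGroup E] [MeasurableSpace E]
    [OpensMeasurableSpace E] {ν : Measure E} {p : E} {τ ρ : ℝ} (hτ : τ ≤ 0) (hρ : 0 < ρ)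
    {Kc : Set E} (hKc : MeasurableSet Kc) (hKcν : ν Kc ≠ ⊤)
    (hnot : ¬ IntegrableOn (fun x => ‖x - p‖ ^ τ) Kc ν) :
    ¬ IntegrableOn (fun x => ‖x - p‖ ^ τ) (closedBall p ρ) ν := by
  intro hball
  apply hnot
  have hsub : Kc ⊆ (Kc ∩ closedBall p ρ) ∪ (Kc \ closedBall p ρ) := by
    intro x hx
    by_cases h : x ∈ closedBall p ρ
    · exact Or.inl ⟨hx, h⟩
    · exact Or.inr ⟨hx, h⟩
  refine IntegrableOn.mono_set ?_ hsub
  refine (hball.mono_set inter_subset_right).union ?_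
  refine Integrable.mono' (g := fun _ => ρ ^ τ) (integrableOn_const ?_)
    ((measurable_rpow_norm p τ).aestronglyMeasurable) ?_
  · exact (lt_of_le_of_lt (measure_mono diff_subset) hKcν.lt_top).ne
  · rw [ae_restrict_iff' (hKc.diff measurableSet_closedBall)]
    refine ae_of_all _ (fun x hx => ?_)
    have hd : ρ < ‖x - p‖ := by
      have := hx.2
      simpa [mem_closedBall, dist_eq_norm, not_le] using this
    rw [Real.norm_eq_abs, abs_of_nonneg (Real.rpow_nonneg (norm_nonneg _) _)]
    exact Real.rpow_le_rpow_of_nonpos hρ hd.le hτ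

end MHCO

namespace MHCO2
open MHCO

lemma exists_eps {E : Type*} [NormedAddCommGroup E] [MeasurableSpace E] [OpensMeasurableSpace E]
    {ν : Measure E} {p : E} {ρ τ : ℝ} (hρ : 0 < ρ) (hτ : τ < 0)
    (hνp : ν {p} = 0) (hνB : ν (closedBall p ρ) ≠ ⊤)
    (hnot : ¬ IntegrableOn (fun x => ‖x - p‖ ^ τ) (closedBall p ρ) ν) :
    ∀ A : ℝ, ∃ ε : ℝ, 0 < ε ∧ ε ≤ 1 ∧
      A < ∫ x in closedBall p ρ, (ε + ‖x - p‖) ^ τ ∂ν := by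
  intro A
  set B1 := closedBall p ρ with hB1
  have hB1m : MeasurableSet B1 := measurableSet_closedBall
  set g : ℕ → E → ℝ≥0∞ := fun m x => ENNReal.ofReal ((1 / ((m:ℝ)+1) + ‖x - p‖) ^ τ) with hg
  have hcont : ∀ m : ℕ, Continuous fun x : E => (1 / ((m:ℝ)+1) + ‖x - p‖) ^ τ := by
    intro m
    refine Continuous.rpow_const
      (continuous_const.add ((continuous_id.sub continuous_const).norm)) (fun x => Or.inl ?_)
    positivity
  have hgm : ∀ m, AEMeasurable (g m) (ν.restrict B1) :=
    fun m => ((hcont m).measurable.ennreal_ofReal).aemeasurable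
  have hmono : ∀ x, Monotone fun m : ℕ => g m x := by
    intro x m1 m2 hm
    apply ENNReal.ofReal_le_ofReal
    apply Real.rpow_le_rpow_of_nonpos (by positivity) _ hτ.le
    have h12 : (1:ℝ) / ((m2:ℝ)+1) ≤ 1 / ((m1:ℝ)+1) := by
      apply one_div_le_one_div_of_le (by positivity)
      have : (m1:ℝ) ≤ (m2:ℝ) := Nat.cast_le.2 hm
      linarith
    linarith
  have hae_ne : ∀ᵐ x ∂(ν.restrict B1), x ≠ p := by
    refine ae_restrict_of_ae ?_
    rw [ae_iff]
    simpa using hνp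
  have hsup : ∀ᵐ x ∂(ν.restrict B1), (⨆ m, g m x) = ENNReal.ofReal (‖x - p‖ ^ τ) := by
    filter_upwards [hae_ne] with x hx
    have hr : 0 < ‖x - p‖ := by rwa [norm_pos_iff, sub_ne_zero]
    have htd : Filter.Tendsto (fun m : ℕ => g m x) atTop
        (𝓝 (ENNReal.ofReal (‖x - p‖ ^ τ))) := by
      apply (ENNReal.continuous_ofReal.tendsto _).comp
      have h1 : Filter.Tendsto (fun m : ℕ => 1 / ((m:ℝ)+1) + ‖x - p‖) atTop
          (𝓝 (0 + ‖x - p‖)) :=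
        tendsto_one_div_add_atTop_nhds_zero_nat.add tendsto_const_nhds
      rw [zero_add] at h1
      exact (Real.continuousAt_rpow_const _ _ (Or.inl (ne_of_gt hr))).tendsto.comp h1
    exact tendsto_nhds_unique (tendsto_atTop_iSup (hmono x)) htd
  have hlint : ∫⁻ x in B1, ENNReal.ofReal (‖x - p‖ ^ τ) ∂ν = ⊤ := by
    by_contra h
    exact hnot (integrable_of_lintegral_ne_top
      ((measurable_rpow_norm p τ).aestronglyMeasurable)
      (ae_of_all _ fun x => Real.rpow_nonneg (norm_nonneg _) _) h)
  have hkey : (⨆ m, ∫⁻ x in B1, g m x ∂ν) = ⊤ := by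
    rw [← lintegral_iSup' hgm (ae_of_all _ hmono), ← hlint]
    exact lintegral_congr_ae hsup
  have hJfin : ∀ m : ℕ, ∫⁻ x in B1, g m x ∂ν ≠ ⊤ := by
    intro m
    have hb : ∀ x, g m x ≤ ENNReal.ofReal ((1 / ((m:ℝ)+1)) ^ τ) := by
      intro x
      apply ENNReal.ofReal_le_ofReal
      apply Real.rpow_le_rpow_of_nonpos (by positivity) _ hτ.le
      have := norm_nonneg (x - p)
      linarith
    have hle : ∫⁻ x in B1, g m x ∂ν ≤ ENNReal.ofReal ((1 / ((m:ℝ)+1)) ^ τ) * ν B1 := by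
      calc ∫⁻ x in B1, g m x ∂ν ≤ ∫⁻ _ in B1, ENNReal.ofReal ((1 / ((m:ℝ)+1)) ^ τ) ∂ν :=
            lintegral_mono hb
        _ = ENNReal.ofReal ((1 / ((m:ℝ)+1)) ^ τ) * ν B1 := by rw [setLIntegral_const]
    exact ne_top_of_le_ne_top (ENNReal.mul_ne_top ENNReal.ofReal_ne_top hνB) hle
  obtain ⟨m, hm⟩ : ∃ m, ENNReal.ofReal (max A 0) < ∫⁻ x in B1, g m x ∂ν := by
    apply lt_iSup_iff.mp
    rw [hkey]
    exact ENNReal.ofReal_lt_top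
  refine ⟨1 / ((m:ℝ)+1), by positivity, ?_, ?_⟩
  · rw [div_le_one (by positivity)]
    have : (0:ℝ) ≤ (m:ℝ) := Nat.cast_nonneg m
    linarith
  · have heq : ∫ x in B1, (1 / ((m:ℝ)+1) + ‖x - p‖) ^ τ ∂ν
        = (∫⁻ x in B1, g m x ∂ν).toReal := by
      rw [integral_eq_lintegral_of_nonneg_ae
        (ae_of_all _ fun x => Real.rpow_nonneg (by positivity) _)
        ((hcont m).aestronglyMeasurable)]
    rw [heq]
    calc A ≤ max A 0 := le_max_left _ _
      _ = (ENNReal.ofReal (max A 0)).toReal := by rw [ENNReal.toReal_ofReal (le_max_right _ _)]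
      _ < (∫⁻ x in B1, g m x ∂ν).toReal := ENNReal.toReal_strict_mono (hJfin m) hm

end MHCO2

namespace MHCO3
open MHCO

lemma fderiv_bound_ball {F : Type*} [NormedAddCommGroup F] [NormedSpace ℝ F]
    {φ : F → ℝ} {p : F} {ε ρ η b σ : ℝ} (hε : 0 < ε) (hρ : 0 < ρ) (hη : η < 0)
    (hσ0 : 0 < σ) (hσ1 : σ < 1) (hσb : |η| * (1-σ) ^ (η-1) ≤ b)
    (hφ : ∀ y : F, ‖y - p‖ ≤ ρ → φ y = (ε + ‖y - p‖) ^ η)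
    {x : F} (hx : ‖x - p‖ < ρ) :
    ‖fderiv ℝ φ x‖ ≤ b * (ε + ‖x - p‖) ^ (η - 1) := by
  set r := ‖x - p‖ with hr
  have hr0 : 0 ≤ r := norm_nonneg _
  set s := min (σ * ε) (ρ - r) with hs
  have hs0 : 0 < s := lt_min (by positivity) (by linarith)
  set m0 := (1 - σ) * (ε + r) with hm0
  have hm0pos : 0 < m0 := _root_.mul_pos (by linarith) (by positivity)
  have hmaps : Set.MapsTo (fun y : F => ε + ‖y - p‖) (ball x s) (Set.Ici m0) := by
    intro y hy
    have h1 : ‖x - y‖ < s := by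
      rw [mem_ball, dist_comm, dist_eq_norm] at hy; exact hy
    have h2 : r ≤ ‖y - p‖ + ‖x - y‖ := by
      have h := norm_add_le (x - y) (y - p)
      rw [sub_add_sub_cancel] at h
      linarith
    have h3 : s ≤ σ * ε := min_le_left _ _
    simp only [Set.mem_Ici, hm0]
    nlinarith [norm_nonneg (y - p)]
  have hlip0 : LipschitzOnWith (Real.toNNReal (|η| * m0 ^ (η-1)) * 1)
      (fun y : F => (ε + ‖y - p‖) ^ η) (ball x s) :=
    (lipOn_rpow hm0pos (by linarith : η ≤ 1)).comp
      ((lip_shift_norm ε p).lipschitzOnWith (s := ball x s)) hmaps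
  have hballsub : ∀ y ∈ ball x s, ‖y - p‖ ≤ ρ := by
    intro y hy
    have h1 : ‖y - x‖ < s := by rw [mem_ball, dist_eq_norm] at hy; exact hy
    have h2 : ‖y - p‖ ≤ ‖y - x‖ + r := by
      have h := norm_add_le (y - x) (x - p)
      rw [sub_add_sub_cancel] at h
      linarith
    have h3 : s ≤ ρ - r := min_le_right _ _
    linarith
  have hlip : LipschitzOnWith (Real.toNNReal (|η| * m0 ^ (η-1)) * 1) φ (ball x s) :=
    lipschitzOnWith_congr hlip0 (fun y hy => hφ y (hballsub y hy))
  have hb0 : ‖fderiv ℝ φ x‖ ≤ ((Real.toNNReal (|η| * m0 ^ (η-1)) * 1 : ℝ≥0) : ℝ) :=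
    norm_fderiv_le_of_lipschitzOn ℝ (ball_mem_nhds x hs0) hlip
  refine hb0.trans ?_
  rw [NNReal.coe_mul, NNReal.coe_one, mul_one, Real.coe_toNNReal _ (by positivity), hm0,
    Real.mul_rpow (by linarith) (by positivity), ← mul_assoc]
  exact mul_le_mul_of_nonneg_right hσb (Real.rpow_nonneg (by positivity) _)

lemma fderiv_bound_annulus {F : Type*} [NormedAddCommGroup F] [NormedSpace ℝ F]
    {φ : F → ℝ} {p : F} {ε ρ η : ℝ} (hε : 0 < ε) (hρ : 0 < ρ) (hη : η < 0)
    (hφ : ∀ y : F, φ y = (ε + ‖y - p‖) ^ η * min 1 (max 0 (2 - ‖y - p‖ / ρ)))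
    {x : F} (hx : ρ < ‖x - p‖) :
    ‖fderiv ℝ φ x‖ ≤ ρ ^ η * ρ⁻¹ + |η| * ρ ^ (η - 1) := by
  set U : Set F := {y | ρ < ‖y - p‖} with hU
  have hUopen : IsOpen U :=
    isOpen_lt continuous_const ((continuous_id.sub continuous_const).norm)
  have hmaps : Set.MapsTo (fun y : F => ε + ‖y - p‖) U (Set.Ici (ε + ρ)) := by
    intro y hy
    have h1 : ρ < ‖y - p‖ := hy
    simp only [Set.mem_Ici]
    linarith
  have hg1 : LipschitzOnWith (Real.toNNReal (|η| * (ε+ρ) ^ (η-1)) * 1)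
      (fun y : F => (ε + ‖y - p‖) ^ η) U :=
    (lipOn_rpow (by positivity) (by linarith)).comp
      ((lip_shift_norm ε p).lipschitzOnWith (s := U)) hmaps
  have hg2 : LipschitzOnWith (Real.toNNReal ρ⁻¹)
      (fun y : F => min 1 (max 0 (2 - ‖y - p‖ / ρ))) U :=
    (lip_cut hρ p).lipschitzOnWith (s := U)
  have hA : ∀ y ∈ U, |(ε + ‖y - p‖) ^ η| ≤ ρ ^ η := by
    intro y hy
    have h1 : ρ < ‖y - p‖ := hy
    rw [abs_of_nonneg (Real.rpow_nonneg (by positivity) _)]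
    exact Real.rpow_le_rpow_of_nonpos hρ (by linarith) hη.le
  have hB : ∀ y ∈ U, |min 1 (max 0 (2 - ‖y - p‖ / ρ))| ≤ 1 := by
    intro y _
    rw [abs_of_nonneg (le_min zero_le_one (le_max_left _ _))]
    exact min_le_left _ _
  have hlip := lipOn_mul hg1 hg2 hA hB
  have hfd := norm_fderiv_le_of_lipschitzOn ℝ (hUopen.mem_nhds hx)
    (lipschitzOnWith_congr hlip (fun y _ => hφ y))
  refine hfd.trans ?_
  rw [Real.coe_toNNReal']
  refine max_le ?_ (by positivity)
  rw [NNReal.coe_mul, NNReal.coe_one, mul_one, Real.coe_toNNReal _ (by positivity),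
    Real.coe_toNNReal _ (by positivity), one_mul]
  refine add_le_add le_rfl (mul_le_mul_of_nonneg_left ?_ (abs_nonneg η))
  exact Real.rpow_le_rpow_of_nonpos hρ (by linarith) (by linarith)

lemma fderiv_zero_far {F : Type*} [NormedAddCommGroup F] [NormedSpace ℝ F]
    {φ : F → ℝ} {p : F} {ρ : ℝ}
    (hφ : ∀ y : F, 2*ρ ≤ ‖y - p‖ → φ y = 0) {x : F} (hx : 2*ρ < ‖x - p‖) :
    fderiv ℝ φ x = 0 := by
  have hUopen : IsOpen {y : F | 2*ρ < ‖y - p‖} :=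
    isOpen_lt continuous_const ((continuous_id.sub continuous_const).norm)
  have hev : φ =ᶠ[𝓝 x] (fun _ => (0:ℝ)) := by
    filter_upwards [hUopen.mem_nhds hx] with y hy
    exact hφ y (le_of_lt hy)
  rw [Filter.EventuallyEq.fderiv_eq hev, fderiv_const_apply]

end MHCO3

noncomputable section

/-- Euclidean space `ℝ^N`. -/
abbrev Euc (N : ℕ) := EuclideanSpace ℝ (Fin N)

/-- The measure `dμ = μ(x) dx` on `ℝ^N`. -/
noncomputable def wMeasure {N : ℕ} (μ : Euc N → ℝ) : Measure (Euc N) :=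
  volume.withDensity fun x => ENNReal.ofReal (μ x)

set_option maxHeartbeats 4000000 in
/-- Theorem 5.1 (optimality of the constant): under hypothesis `H3` at some pole `aᵢ`,
for every `c > c_o(N+k₂) = ((N+k₂-2)/2)²` the bottom of the spectrum is `-∞`:
for every `λ` there is a compactly supported Lipschitz `φ` with `0 < ∫ φ² dμ < ∞` and
`∫ |∇φ|² dμ - c ∑ⱼ ∫ φ²/|x-aⱼ|² dμ < λ ∫ φ² dμ`.
In particular, the multipolar Hardy inequality fails for every constant `K`. -/
theorem multipolar_hardy_constant_optimal {N n : ℕ} (hN : 3 ≤ N) (hn : 1 ≤ n)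
    (a : Fin n → Euc N) (ha : Function.Injective a)
    (k2 : ℝ) (hk2 : 2 - (N : ℝ) < k2)
    (μ : Euc N → ℝ) (hμpos : ∀ᵐ x ∂(volume : Measure (Euc N)), 0 < μ x)
    (hμloc : LocallyIntegrable μ volume)
    (i : Fin n)
    (hH3 : sSup {δ : ℝ | ∀ K : Set (Euc N), IsCompact K →
        IntegrableOn (fun x => ‖x - a i‖ ^ (-δ)) K (wMeasure μ)} = (N : ℝ) + k2) :
    ∀ c : ℝ, (((N : ℝ) + k2 - 2) / 2) ^ 2 < c →
      (∀ lam : ℝ,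
        ∃ φ : Euc N → ℝ, (∃ L : NNReal, LipschitzWith L φ) ∧ HasCompactSupport φ ∧
          Integrable (fun x => φ x ^ 2) (wMeasure μ) ∧
          0 < ∫ x, φ x ^ 2 ∂(wMeasure μ) ∧
          Integrable (fun x => ‖gradient φ x‖ ^ 2) (wMeasure μ) ∧
          (∀ j : Fin n, Integrable (fun x => φ x ^ 2 / ‖x - a j‖ ^ 2) (wMeasure μ)) ∧
          ∫ x, ‖gradient φ x‖ ^ 2 ∂(wMeasure μ)
              - c * ∑ j, ∫ x, φ x ^ 2 / ‖x - a j‖ ^ 2 ∂(wMeasure μ)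
            < lam * ∫ x, φ x ^ 2 ∂(wMeasure μ)) ∧
      (∀ K : ℝ, ¬ ∀ φ : Euc N → ℝ,
          (∃ L : NNReal, LipschitzWith L φ) → HasCompactSupport φ →
            c * ∑ j, ∫ x, φ x ^ 2 / ‖x - a j‖ ^ 2 ∂(wMeasure μ)
              ≤ ∫ x, ‖gradient φ x‖ ^ 2 ∂(wMeasure μ)
                + K * ∫ x, φ x ^ 2 ∂(wMeasure μ)) := by
  intro c hc
  haveI : Nonempty (Fin N) := ⟨⟨0, by omega⟩⟩
  have hNc : (3:ℝ) ≤ (N:ℝ) := by exact_mod_cast hN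
  set q : ℝ := (N : ℝ) + k2 with hqdef
  have hq : (2:ℝ) < q := by rw [hqdef]; linarith
  set ν : Measure (Euc N) := wMeasure μ with hνdef
  haveI hfinC : IsFiniteMeasureOnCompacts ν := by
    constructor
    intro K hK
    rw [hνdef]
    simp only [wMeasure]
    rw [withDensity_apply _ hK.measurableSet]
    calc ∫⁻ x in K, ENNReal.ofReal (μ x) ∂volume
        ≤ ∫⁻ x in K, (‖μ x‖₊ : ℝ≥0∞) ∂volume :=
          lintegral_mono fun x => Real.ofReal_le_enorm _
      _ < ⊤ := (hμloc.integrableOn_isCompact hK).2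
  have hac : ∀ s : Set (Euc N), volume s = 0 → ν s = 0 := by
    intro s hs
    rw [hνdef]
    simp only [wMeasure]
    exact (withDensity_absolutelyContinuous volume _) hs
  have hνpt : ∀ z : Euc N, ν {z} = 0 := fun z => hac _ (measure_singleton z)
  have hballpos : ∀ r : ℝ, 0 < r → 0 < ν (Metric.closedBall (a i) r) := by
    intro r hr
    have hvol : volume (Metric.ball (a i) r) ≠ 0 := (measure_ball_pos volume (a i) hr).ne'
    have hb : ν (Metric.ball (a i) r) ≠ 0 := by
      intro h0
      apply hvol
      rw [hνdef] at h0
      simp only [wMeasure] at h0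
      rw [withDensity_apply _ measurableSet_ball] at h0
      have haem : AEMeasurable (fun x => ENNReal.ofReal (μ x))
          (volume.restrict (Metric.ball (a i) r)) :=
        (hμloc.aestronglyMeasurable.aemeasurable.ennreal_ofReal).restrict
      have h1 := (lintegral_eq_zero_iff' haem).1 h0
      have h2 : ∀ᵐ x ∂(volume.restrict (Metric.ball (a i) r)), 0 < μ x :=
        ae_restrict_of_ae hμpos
      have h3 : ∀ᵐ x ∂(volume.restrict (Metric.ball (a i) r)), False := by
        filter_upwards [h1, h2] with x hx1 hx2
        rw [Pi.zero_apply] at hx1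
        exact absurd hx1 (ne_of_gt (ENNReal.ofReal_pos.2 hx2))
      have h4 := ae_iff.1 h3
      simpa [Measure.restrict_apply] using h4
    calc (0:ℝ≥0∞) < ν (Metric.ball (a i) r) := pos_iff_ne_zero.2 hb
      _ ≤ ν (Metric.closedBall (a i) r) := measure_mono Metric.ball_subset_closedBall
  set S : Set ℝ := {δ : ℝ | ∀ K : Set (Euc N), IsCompact K →
      IntegrableOn (fun x => ‖x - a i‖ ^ (-δ)) K ν} with hSdef
  have hS0 : (0:ℝ) ∈ S := by
    intro K hK
    have h : (fun x : Euc N => ‖x - a i‖ ^ (-(0:ℝ))) = fun _ => (1:ℝ) := by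
      funext x; rw [neg_zero, Real.rpow_zero]
    rw [h]
    exact integrableOn_const hK.measure_lt_top.ne
  have hSbdd : BddAbove S := by
    by_contra hb
    rw [Real.sSup_of_not_bddAbove hb] at hH3
    linarith
  have hSmem : ∀ δ : ℝ, 0 < δ → δ < q → ∀ K : Set (Euc N), IsCompact K →
      IntegrableOn (fun x => ‖x - a i‖ ^ (-δ)) K ν := by
    intro δ hδ0 hδq
    obtain ⟨δ₀, hδ₀S, hδδ₀⟩ := exists_lt_of_lt_csSup ⟨0, hS0⟩ (by rw [hH3]; exact hδq)
    intro K hK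
    exact MHCO.integrableOn_rpow_of_le hδ0 hδδ₀.le hK.measurableSet hK.measure_lt_top.ne
      (hδ₀S K hK)
  have part1 : ∀ lam : ℝ,
      ∃ φ : Euc N → ℝ, (∃ L : NNReal, LipschitzWith L φ) ∧ HasCompactSupport φ ∧
        Integrable (fun x => φ x ^ 2) ν ∧
        0 < ∫ x, φ x ^ 2 ∂ν ∧
        Integrable (fun x => ‖gradient φ x‖ ^ 2) ν ∧
        (∀ j : Fin n, Integrable (fun x => φ x ^ 2 / ‖x - a j‖ ^ 2) ν) ∧
        ∫ x, ‖gradient φ x‖ ^ 2 ∂ν - c * ∑ j, ∫ x, φ x ^ 2 / ‖x - a j‖ ^ 2 ∂ν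
          < lam * ∫ x, φ x ^ 2 ∂ν := by
    intro lam
    -- choice of ρ
    obtain ⟨ρ, hρ0, hρ1, hρsep⟩ : ∃ ρ : ℝ, 0 < ρ ∧ ρ ≤ 1 ∧
        ∀ j, j ≠ i → 3*ρ ≤ dist (a j) (a i) := by
      set g : Fin n → ℝ := fun j => if j = i then 1 else dist (a j) (a i) / 3 with hg
      have hgpos : ∀ j, 0 < g j := by
        intro j
        by_cases hj : j = i
        · simp [hg, hj]
        · simp only [hg, hj, if_false]
          exact div_pos (dist_pos.2 (fun h => hj (ha h))) (by norm_num)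
      refine ⟨min 1 (Finset.univ.inf' ⟨i, Finset.mem_univ i⟩ g), ?_, min_le_left _ _, ?_⟩
      · exact lt_min one_pos ((Finset.lt_inf'_iff _).2 fun j _ => hgpos j)
      · intro j hj
        have h1 : Finset.univ.inf' ⟨i, Finset.mem_univ i⟩ g ≤ g j :=
          Finset.inf'_le _ (Finset.mem_univ j)
        have h2 : min 1 (Finset.univ.inf' ⟨i, Finset.mem_univ i⟩ g) ≤ g j :=
          le_trans (min_le_right _ _) h1
        rw [hg] at h2
        simp only [hj, if_false] at h2
        linarith
    -- choice of η, b, σ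
    have hc0 : 0 < c := lt_of_le_of_lt (sq_nonneg _) hc
    have hsqc : (q-2)/2 < Real.sqrt c := by
      rw [Real.lt_sqrt (by linarith)]
      exact hc
    set η : ℝ := (max (-Real.sqrt c) (-(q/2)) + (-((q-2)/2)))/2 with hηdef
    have hmaxlt : max (-Real.sqrt c) (-(q/2)) < -((q-2)/2) := by
      apply max_lt (by linarith) (by linarith)
    have hηlt : η < -((q-2)/2) := by rw [hηdef]; linarith
    have hηgt : max (-Real.sqrt c) (-(q/2)) < η := by rw [hηdef]; linarith
    have hη0 : η < 0 := by linarith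
    have hηsqrt : -Real.sqrt c < η := lt_of_le_of_lt (le_max_left _ _) hηgt
    have hηq2 : -(q/2) < η := lt_of_le_of_lt (le_max_right _ _) hηgt
    have hsqrt0 : 0 < Real.sqrt c := Real.sqrt_pos.2 hc0
    have hηabs : |η| < Real.sqrt c := abs_lt.2 ⟨hηsqrt, by linarith⟩
    set b : ℝ := (|η| + Real.sqrt c)/2 with hbdef
    have hb0 : 0 ≤ b := by rw [hbdef]; positivity
    have hbabs : |η| < b := by rw [hbdef]; linarith
    have hbsq : b^2 < c := by
      have hbs : b < Real.sqrt c := by rw [hbdef]; linarith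
      calc b^2 < Real.sqrt c ^ 2 := by nlinarith
        _ = c := Real.sq_sqrt hc0.le
    obtain ⟨σ, hσ0, hσ1, hσb⟩ : ∃ σ : ℝ, 0 < σ ∧ σ < 1 ∧ |η| * (1-σ)^(η-1) ≤ b := by
      have hcont : ContinuousAt (fun σ : ℝ => |η| * (1-σ)^(η-1)) 0 := by
        apply ContinuousAt.mul continuousAt_const
        apply ContinuousAt.rpow_const
        · exact (continuous_const.sub continuous_id).continuousAt
        · left; norm_num
      have hval : |η| * (1-(0:ℝ))^(η-1) = |η| := by
        norm_num [Real.one_rpow]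
      have hev : ∀ᶠ σ in 𝓝 (0:ℝ), |η| * (1-σ)^(η-1) < b := by
        have ht := hcont.tendsto
        rw [hval] at ht
        exact ht.eventually_lt_const hbabs
      have hlt1 : ∀ᶠ σ in 𝓝 (0:ℝ), σ < 1 :=
        tendsto_id.eventually_lt_const one_pos
      have hcomb := ((hev.and hlt1).filter_mono (nhdsWithin_le_nhds (s := Set.Ioi (0:ℝ)))).and
        self_mem_nhdsWithin
      obtain ⟨σ, ⟨hσ1, hσ2⟩, hσ3⟩ := hcomb.exists
      exact ⟨σ, hσ3, hσ2, hσ1.le⟩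
    -- balls
    set B1 : Set (Euc N) := Metric.closedBall (a i) ρ with hB1def
    set B2 : Set (Euc N) := Metric.closedBall (a i) (2*ρ) with hB2def
    have hB1m : MeasurableSet B1 := measurableSet_closedBall
    have hB2m : MeasurableSet B2 := measurableSet_closedBall
    have hνB1 : ν B1 ≠ ⊤ := (isCompact_closedBall _ _).measure_lt_top.ne
    have hνB2 : ν B2 ≠ ⊤ := (isCompact_closedBall _ _).measure_lt_top.ne
    -- integrability facts
    have hint2 : IntegrableOn (fun x => ‖x - a i‖ ^ (-(2:ℝ))) B2 ν :=
      hSmem 2 two_pos hq _ (isCompact_closedBall _ _)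
    have hint2η : IntegrableOn (fun x => ‖x - a i‖ ^ (2*η)) B2 ν := by
      have h := hSmem (-(2*η)) (by linarith) (by linarith) B2 (isCompact_closedBall _ _)
      simpa using h
    have hnotint : ¬ IntegrableOn (fun x => ‖x - a i‖ ^ (2*η-2)) B1 ν := by
      have hnotS : (2 - 2*η) ∉ S := by
        intro hmem
        have h := le_csSup hSbdd hmem
        rw [hH3] at h
        linarith
      rw [hSdef, Set.mem_setOf_eq] at hnotS
      push_neg at hnotS
      obtain ⟨Kc, hKc, hKcnot⟩ := hnotS
      have hfun : (fun x : Euc N => ‖x - a i‖ ^ (-(2 - 2*η))) =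
          fun x => ‖x - a i‖ ^ (2*η - 2) := by
        funext x; congr 1; ring
      rw [hfun] at hKcnot
      exact MHCO.notIntegrableOn_closedBall (by linarith) hρ0 hKc.measurableSet
        hKc.measure_lt_top.ne hKcnot
    -- constants
    set C : ℝ := ρ ^ η * ρ⁻¹ + |η| * ρ ^ (η - 1) with hCdef
    have hC0 : 0 ≤ C := by rw [hCdef]; positivity
    set M : ℝ := ∫ x in B2, ‖x - a i‖ ^ (2*η) ∂ν with hMdef
    have hM0 : 0 ≤ M := by
      rw [hMdef]
      exact integral_nonneg fun x => Real.rpow_nonneg (norm_nonneg _) _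
    set C₀ : ℝ := C^2 * (ν B2).toReal with hC₀def
    -- choice of ε
    obtain ⟨ε, hε0, hε1, hI⟩ := MHCO2.exists_eps hρ0 (show 2*η-2 < 0 by linarith)
      (hνpt (a i)) hνB1 hnotint (max 0 ((C₀ + |lam| * M) / (c - b^2)))
    rw [← hB1def] at hI
    set I : ℝ := ∫ x in B1, (ε + ‖x - a i‖) ^ (2*η-2) ∂ν with hIdef
    -- the function
    set cut : Euc N → ℝ := fun x => min 1 (max 0 (2 - ‖x - a i‖ / ρ)) with hcutdef
    set φ : Euc N → ℝ := fun x => (ε + ‖x - a i‖) ^ η * cut x with hφdef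
    have hcut_le1 : ∀ x, cut x ≤ 1 := fun x => min_le_left _ _
    have hcut_nonneg : ∀ x, 0 ≤ cut x := fun x => le_min zero_le_one (le_max_left _ _)
    have hcut1 : ∀ x : Euc N, ‖x - a i‖ ≤ ρ → cut x = 1 := by
      intro x hx
      have h1 : (1:ℝ) ≤ 2 - ‖x - a i‖ / ρ := by
        have h := (div_le_one hρ0).2 hx
        linarith
      show min 1 (max 0 (2 - ‖x - a i‖ / ρ)) = 1
      rw [max_eq_right (by linarith : (0:ℝ) ≤ 2 - ‖x - a i‖ / ρ), min_eq_left h1]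
    have hcut0 : ∀ x : Euc N, 2*ρ ≤ ‖x - a i‖ → cut x = 0 := by
      intro x hx
      have h1 : 2 - ‖x - a i‖ / ρ ≤ 0 := by
        have h : (2:ℝ) ≤ ‖x - a i‖ / ρ := (le_div_iff₀ hρ0).2 (by linarith)
        linarith
      show min 1 (max 0 (2 - ‖x - a i‖ / ρ)) = 0
      rw [max_eq_left h1, min_eq_right zero_le_one]
    have hεr : ∀ x : Euc N, 0 < ε + ‖x - a i‖ := fun x => by positivity
    have hφball : ∀ x : Euc N, ‖x - a i‖ ≤ ρ → φ x = (ε + ‖x - a i‖) ^ η := by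
      intro x hx
      show (ε + ‖x - a i‖) ^ η * cut x = _
      rw [hcut1 x hx, mul_one]
    have hφzero : ∀ x : Euc N, 2*ρ ≤ ‖x - a i‖ → φ x = 0 := by
      intro x hx
      show (ε + ‖x - a i‖) ^ η * cut x = 0
      rw [hcut0 x hx, mul_zero]
    have hφnonneg : ∀ x, 0 ≤ φ x :=
      fun x => mul_nonneg (Real.rpow_nonneg (hεr x).le _) (hcut_nonneg x)
    have hφle : ∀ x : Euc N, φ x ≤ (ε + ‖x - a i‖) ^ η := fun x =>
      mul_le_of_le_one_right (Real.rpow_nonneg (hεr x).le _) (hcut_le1 x)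
    have hφle_eps : ∀ x : Euc N, φ x ≤ ε ^ η := fun x => (hφle x).trans
      (Real.rpow_le_rpow_of_nonpos hε0 (by linarith [norm_nonneg (x - a i)]) hη0.le)
    have hsq : ∀ t p' : ℝ, 0 < t → (t ^ p')^2 = t ^ (2*p') := by
      intro t p' ht
      have h2 : ((2:ℕ):ℝ) = 2 := by norm_num
      rw [← Real.rpow_natCast (t ^ p') 2, ← Real.rpow_mul ht.le, h2, mul_comm]
    -- Lipschitz
    have hlipφ : ∃ L : NNReal, LipschitzWith L φ := by
      have hg1 : LipschitzOnWith (Real.toNNReal (|η| * ε ^ (η-1)) * 1)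
          (fun x : Euc N => (ε + ‖x - a i‖) ^ η) Set.univ :=
        (MHCO.lipOn_rpow hε0 (by linarith)).comp
          ((MHCO.lip_shift_norm ε (a i)).lipschitzOnWith (s := Set.univ))
          (fun x _ => by
            simp only [Set.mem_Ici]
            linarith [norm_nonneg (x - a i)])
      have hg2 : LipschitzOnWith (Real.toNNReal ρ⁻¹) cut Set.univ :=
        (MHCO.lip_cut hρ0 (a i)).lipschitzOnWith (s := Set.univ)
      have hA : ∀ x ∈ Set.univ, |(ε + ‖x - a i‖) ^ η| ≤ ε ^ η := by
        intro x _
        rw [abs_of_nonneg (Real.rpow_nonneg (hεr x).le _)]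
        exact Real.rpow_le_rpow_of_nonpos hε0 (by linarith [norm_nonneg (x - a i)]) hη0.le
      have hB : ∀ x ∈ Set.univ, |cut x| ≤ 1 := fun x _ => by
        rw [abs_of_nonneg (hcut_nonneg x)]; exact hcut_le1 x
      have hm := MHCO.lipOn_mul hg1 hg2 hA hB
      exact ⟨_, lipschitzOnWith_univ.1 hm⟩
    obtain ⟨L, hL⟩ := hlipφ
    have hφcont : Continuous φ := hL.continuous
    -- compact support
    have hsupp : HasCompactSupport φ := by
      apply HasCompactSupport.intro (isCompact_closedBall (a i) (2*ρ))
      intro x hx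
      apply hφzero
      rw [Metric.mem_closedBall, not_le, dist_eq_norm] at hx
      exact hx.le
    -- measurability
    have hmess : ∀ j : Fin n, AEStronglyMeasurable (fun x => φ x ^ 2 / ‖x - a j‖ ^ 2) ν := by
      intro j
      apply Measurable.aestronglyMeasurable
      exact ((hφcont.pow 2).measurable).div
        (((continuous_id.sub continuous_const).norm.pow 2).measurable)
    have hneai : ∀ᵐ x ∂ν, x ≠ a i := by
      rw [ae_iff]
      simpa using hνpt (a i)
    -- φ² integrable and bounds
    have hMdom_int : Integrable (B2.indicator fun x => ‖x - a i‖ ^ (2*η)) ν :=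
      (integrable_indicator_iff hB2m).2 hint2η
    have hφsq_le : ∀ᵐ x ∂ν, φ x ^ 2 ≤ B2.indicator (fun x => ‖x - a i‖ ^ (2*η)) x := by
      filter_upwards [hneai] with x hx
      by_cases hxB : x ∈ B2
      · rw [Set.indicator_of_mem hxB]
        have hr0 : 0 < ‖x - a i‖ := by rwa [norm_pos_iff, sub_ne_zero]
        have h1 : φ x ≤ ‖x - a i‖ ^ η :=
          (hφle x).trans (Real.rpow_le_rpow_of_nonpos hr0 (by linarith) hη0.le)
        calc φ x ^ 2 ≤ (‖x - a i‖ ^ η)^2 := pow_le_pow_left₀ (hφnonneg x) h1 2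
          _ = ‖x - a i‖ ^ (2*η) := hsq _ _ hr0
      · rw [Set.indicator_of_notMem hxB]
        have h2 : 2*ρ ≤ ‖x - a i‖ := by
          rw [hB2def, Metric.mem_closedBall, not_le, dist_eq_norm] at hxB
          exact hxB.le
        rw [hφzero x h2]
        norm_num
    have hφ2int : Integrable (fun x => φ x ^ 2) ν := by
      refine Integrable.mono' hMdom_int ((hφcont.pow 2).aestronglyMeasurable) ?_
      filter_upwards [hφsq_le] with x hx
      rwa [Real.norm_eq_abs, abs_of_nonneg (sq_nonneg _)]
    have hFleM : ∫ x, φ x ^ 2 ∂ν ≤ M := by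
      have h1 := integral_mono_ae hφ2int hMdom_int hφsq_le
      rwa [integral_indicator hB2m, ← hMdef] at h1
    have hFpos : 0 < ∫ x, φ x ^ 2 ∂ν := by
      have hm2 : (0:ℝ) < ((1+ρ) ^ η)^2 := by
        have := Real.rpow_pos_of_pos (show (0:ℝ) < 1 + ρ by linarith) η
        positivity
      have h1 : ∫ x in B1, ((1+ρ)^η)^2 ∂ν ≤ ∫ x in B1, φ x ^ 2 ∂ν := by
        apply setIntegral_mono_on (integrableOn_const hνB1)
          (hφ2int.integrableOn) hB1m
        intro x hx
        have hxr : ‖x - a i‖ ≤ ρ := by rwa [hB1def, Metric.mem_closedBall, dist_eq_norm] at hx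
        have h2 : (1+ρ)^η ≤ (ε + ‖x - a i‖) ^ η :=
          Real.rpow_le_rpow_of_nonpos (hεr x) (by linarith) hη0.le
        have h3 : (0:ℝ) < (1+ρ)^η := Real.rpow_pos_of_pos (by linarith) _
        rw [hφball x hxr]
        exact pow_le_pow_left₀ h3.le h2 2
      have h0 : ∫ x in B1, ((1+ρ)^η)^2 ∂ν = ((1+ρ)^η)^2 * (ν B1).toReal := by
        rw [setIntegral_const, smul_eq_mul, measureReal_def]; ring
      have h4 : 0 < ((1+ρ)^η)^2 * (ν B1).toReal := by
        apply mul_pos hm2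
        exact ENNReal.toReal_pos (hballpos ρ hρ0).ne' hνB1
      have h5 : ∫ x in B1, φ x ^ 2 ∂ν ≤ ∫ x, φ x ^ 2 ∂ν :=
        setIntegral_le_integral hφ2int (ae_of_all _ fun x => sq_nonneg _)
      rw [h0] at h1
      linarith
    -- Hardy term at pole i
    have hHi_int : Integrable (fun x => φ x ^ 2 / ‖x - a i‖ ^ 2) ν := by
      have hgint : Integrable (fun x => ε^(2*η) *
          (B2.indicator (fun y => ‖y - a i‖ ^ (-(2:ℝ))) x)) ν :=
        ((integrable_indicator_iff hB2m).2 hint2).const_mul _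
      refine Integrable.mono' hgint (hmess i) (ae_of_all _ ?_)
      intro x
      rw [Real.norm_eq_abs, abs_of_nonneg (div_nonneg (sq_nonneg _) (sq_nonneg _))]
      by_cases hxB : x ∈ B2
      · rw [Set.indicator_of_mem hxB]
        by_cases hxa : x = a i
        · rw [hxa, sub_self, norm_zero, Real.zero_rpow (by norm_num : (-(2:ℝ)) ≠ 0)]
          norm_num
        · have hr0 : 0 < ‖x - a i‖ := by rw [norm_pos_iff, sub_ne_zero]; exact hxa
          have h1 : φ x ^2 ≤ ε ^ (2*η) := by
            calc φ x ^2 ≤ (ε ^ η)^2 := pow_le_pow_left₀ (hφnonneg x) (hφle_eps x) 2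
              _ = ε ^ (2*η) := hsq _ _ hε0
          have h2 : ‖x - a i‖ ^ (-(2:ℝ)) = (‖x - a i‖^2)⁻¹ := by
            rw [Real.rpow_neg (norm_nonneg _)]
            congr 1
            rw [← Real.rpow_natCast _ 2]
            norm_num
          rw [h2, div_eq_mul_inv]
          exact mul_le_mul_of_nonneg_right h1 (by positivity)
      · have h2ρ : 2*ρ ≤ ‖x - a i‖ := by
          rw [hB2def, Metric.mem_closedBall, not_le, dist_eq_norm] at hxB
          exact hxB.le
        rw [Set.indicator_of_notMem hxB, hφzero x h2ρ]
        norm_num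
    -- Hardy terms at other poles
    have hHj_int : ∀ j : Fin n, Integrable (fun x => φ x ^ 2 / ‖x - a j‖ ^ 2) ν := by
      intro j
      by_cases hj : j = i
      · rw [hj]; exact hHi_int
      · refine Integrable.mono' (hφ2int.const_mul ((ρ^2)⁻¹)) (hmess j) (ae_of_all _ ?_)
        intro x
        rw [Real.norm_eq_abs, abs_of_nonneg (div_nonneg (sq_nonneg _) (sq_nonneg _))]
        by_cases hxB : ‖x - a i‖ < 2*ρ
        · have hd : ρ ≤ ‖x - a j‖ := by
            have h1 : 3*ρ ≤ dist (a j) (a i) := hρsep j hj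
            have h2 : dist (a j) (a i) ≤ dist (a j) x + dist x (a i) := dist_triangle _ _ _
            rw [dist_eq_norm, dist_eq_norm, dist_eq_norm, norm_sub_rev (a j) x] at h2
            rw [dist_eq_norm] at h1
            linarith
          have h3 : (‖x - a j‖^2)⁻¹ ≤ (ρ^2)⁻¹ := by
            apply inv_anti₀ (by positivity)
            nlinarith
          calc φ x^2 / ‖x - a j‖^2 = φ x^2 * (‖x - a j‖^2)⁻¹ := div_eq_mul_inv _ _
            _ ≤ φ x^2 * (ρ^2)⁻¹ := mul_le_mul_of_nonneg_left h3 (sq_nonneg _)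
            _ = (ρ^2)⁻¹ * φ x^2 := mul_comm _ _
        · rw [hφzero x (not_lt.1 hxB)]
          norm_num
    -- gradient measurability
    have hgradmeas : AEStronglyMeasurable (fun x => ‖gradient φ x‖ ^ 2) ν := by
      apply Measurable.aestronglyMeasurable
      have h1 : Measurable (fderiv ℝ φ) := measurable_fderiv ℝ φ
      have h2 : Measurable (gradient φ) := by
        have h : gradient φ = fun x => (InnerProductSpace.toDual ℝ (Euc N)).symm
            (fderiv ℝ φ x) := rfl
        rw [h]
        exact (InnerProductSpace.toDual ℝ (Euc N)).symm.continuous.measurable.comp h1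
      exact h2.norm.pow measurable_const
    -- gradient bound
    set bnd : Euc N → ℝ := fun x => B1.indicator
        (fun y => b^2 * (ε + ‖y - a i‖) ^ (2*η-2)) x + B2.indicator (fun _ => C^2) x with hbnddef
    have hcont1 : Continuous (fun y : Euc N => b^2 * (ε + ‖y - a i‖) ^ (2*η-2)) :=
      continuous_const.mul ((continuous_const.add
        ((continuous_id.sub continuous_const).norm)).rpow_const (fun x => Or.inl (hεr x).ne'))
    have hind1_int : Integrable (fun x => B1.indicator
        (fun y => b^2 * (ε + ‖y - a i‖) ^ (2*η-2)) x) ν := by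
      apply MHCO.integrable_of_bdd_compact hB1m hνB1
        ((hcont1.measurable.indicator hB1m).aestronglyMeasurable) (b^2 * ε^(2*η-2))
      · intro x
        by_cases hx : x ∈ B1
        · rw [Set.indicator_of_mem hx, abs_of_nonneg (by positivity)]
          apply mul_le_mul_of_nonneg_left _ (sq_nonneg b)
          exact Real.rpow_le_rpow_of_nonpos hε0 (by linarith [norm_nonneg (x - a i)])
            (by linarith)
        · rw [Set.indicator_of_notMem hx, abs_zero]
          positivity
      · exact fun x hx => Set.indicator_of_notMem hx _
    have hind2_int : Integrable (fun x => B2.indicator (fun _ : Euc N => C^2) x) ν :=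
      (integrable_indicator_iff hB2m).2 (integrableOn_const hνB2)
    have hbnd_int : Integrable bnd ν := hind1_int.add hind2_int
    have hbnd_nonneg : ∀ x, 0 ≤ bnd x := by
      intro x
      apply add_nonneg
      · exact Set.indicator_nonneg (fun y _ => by positivity) x
      · exact Set.indicator_nonneg (fun y _ => sq_nonneg _) x
    have hφeq : ∀ y : Euc N, φ y = (ε + ‖y - a i‖) ^ η *
        min 1 (max 0 (2 - ‖y - a i‖ / ρ)) := fun y => rfl
    have hgrad_ae : ∀ᵐ x ∂ν, ‖gradient φ x‖^2 ≤ bnd x := by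
      have hsphere : ν (Metric.sphere (a i) ρ) = 0 :=
        hac _ (Measure.addHaar_sphere volume (a i) ρ)
      have hexc : ∀ᵐ x ∂ν, ¬(x = a i ∨ ‖x - a i‖ = ρ) := by
        rw [ae_iff]
        simp only [not_not]
        have hsub : {x : Euc N | x = a i ∨ ‖x - a i‖ = ρ} ⊆
            {a i} ∪ Metric.sphere (a i) ρ := by
          intro x hx
          rcases hx with h | h
          · exact Or.inl h
          · right
            rw [Metric.mem_sphere, dist_eq_norm]
            exact h
        exact measure_mono_null hsub (by
          rw [measure_union_null_iff]
          exact ⟨hνpt _, hsphere⟩)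
      filter_upwards [hexc] with x hx
      push_neg at hx
      obtain ⟨hxa, hxs⟩ := hx
      have hgnorm : ‖gradient φ x‖ = ‖fderiv ℝ φ x‖ := MHCO.norm_gradient_eq φ x
      rcases lt_trichotomy (‖x - a i‖) ρ with hblt | hbeq | hbgt
      · -- inside the ball
        have hb1 := MHCO3.fderiv_bound_ball hε0 hρ0 hη0 hσ0 hσ1 hσb hφball hblt
        have hx1 : x ∈ B1 := by rw [hB1def, Metric.mem_closedBall, dist_eq_norm]; exact hblt.le
        have hx2 : x ∈ B2 := by
          rw [hB2def, Metric.mem_closedBall, dist_eq_norm]; linarith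
        have h2 : ‖gradient φ x‖^2 ≤ (b * (ε + ‖x - a i‖) ^ (η-1))^2 := by
          rw [hgnorm]
          exact pow_le_pow_left₀ (norm_nonneg _) hb1 2
        have h3 : (b * (ε + ‖x - a i‖) ^ (η-1))^2 = b^2 * (ε + ‖x - a i‖)^(2*η-2) := by
          rw [mul_pow, hsq _ _ (hεr x), show 2*(η-1) = 2*η-2 by ring]
        show ‖gradient φ x‖^2 ≤ B1.indicator _ x + B2.indicator _ x
        rw [Set.indicator_of_mem hx1, Set.indicator_of_mem hx2]
        have h4 : (0:ℝ) ≤ C^2 := sq_nonneg _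
        calc ‖gradient φ x‖^2 ≤ b^2 * (ε + ‖x - a i‖)^(2*η-2) := by rw [← h3]; exact h2
          _ ≤ b^2 * (ε + ‖x - a i‖)^(2*η-2) + C^2 := by linarith
      · exact absurd hbeq hxs
      · rcases le_or_gt (‖x - a i‖) (2*ρ) with hle2 | hgt2
        · have hb2 := MHCO3.fderiv_bound_annulus hε0 hρ0 hη0 hφeq hbgt
          have hx1 : x ∉ B1 := by
            rw [hB1def, Metric.mem_closedBall, dist_eq_norm, not_le]; exact hbgt
          have hx2 : x ∈ B2 := by rw [hB2def, Metric.mem_closedBall, dist_eq_norm]; exact hle2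
          show ‖gradient φ x‖^2 ≤ B1.indicator _ x + B2.indicator _ x
          rw [Set.indicator_of_notMem hx1, Set.indicator_of_mem hx2, zero_add]
          rw [hgnorm]
          rw [hCdef]
          exact pow_le_pow_left₀ (norm_nonneg _) hb2 2
        · have hf0 : fderiv ℝ φ x = 0 := MHCO3.fderiv_zero_far hφzero hgt2
          have h0 : ‖gradient φ x‖^2 = 0 := by
            rw [hgnorm, hf0]
            simp
          rw [h0]
          exact hbnd_nonneg x
    have hgradint : Integrable (fun x => ‖gradient φ x‖^2) ν := by
      refine Integrable.mono' hbnd_int hgradmeas ?_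
      filter_upwards [hgrad_ae] with x hx
      rwa [Real.norm_eq_abs, abs_of_nonneg (sq_nonneg _)]
    -- integral estimates
    have hIint : IntegrableOn (fun x => (ε + ‖x - a i‖) ^ (2*η-2)) B1 ν := by
      apply ContinuousOn.integrableOn_compact (isCompact_closedBall _ _)
      exact ((continuous_const.add ((continuous_id.sub continuous_const).norm)).rpow_const
        (fun x => Or.inl (hεr x).ne')).continuousOn
    have hG_le : ∫ x, ‖gradient φ x‖^2 ∂ν ≤ b^2 * I + C₀ := by
      have h1 := integral_mono_ae hgradint hbnd_int hgrad_ae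
      have h2 : ∫ x, bnd x ∂ν = b^2 * I + C₀ := by
        show ∫ x, (B1.indicator _ x + B2.indicator _ x) ∂ν = _
        rw [integral_add hind1_int hind2_int, integral_indicator hB1m, integral_indicator hB2m,
          setIntegral_const, integral_const_mul, smul_eq_mul, measureReal_def]
        rw [hIdef, hC₀def]
        ring
      linarith
    have hHi_ge : I ≤ ∫ x, φ x ^2 / ‖x - a i‖^2 ∂ν := by
      have h1 : I ≤ ∫ x in B1, φ x^2/‖x - a i‖^2 ∂ν := by
        rw [hIdef]
        apply setIntegral_mono_ae_restrict hIint (hHi_int.integrableOn)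
        filter_upwards [ae_restrict_of_ae hneai, ae_restrict_mem hB1m] with x hxa hxB
        have hr0 : 0 < ‖x - a i‖ := by rwa [norm_pos_iff, sub_ne_zero]
        have hxr : ‖x - a i‖ ≤ ρ := by rwa [hB1def, Metric.mem_closedBall, dist_eq_norm] at hxB
        rw [hφball x hxr]
        have h2 : (ε + ‖x - a i‖)^(2*η-2) =
            ((ε + ‖x - a i‖)^η)^2 / (ε + ‖x - a i‖)^2 := by
          rw [hsq _ _ (hεr x), ← Real.rpow_natCast (ε + ‖x - a i‖) 2,
            ← Real.rpow_sub (hεr x)]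
          norm_num
        rw [h2]
        apply div_le_div_of_nonneg_left (sq_nonneg _) (by positivity)
        exact pow_le_pow_left₀ hr0.le (by linarith) 2
      exact h1.trans (setIntegral_le_integral hHi_int
        (ae_of_all _ fun x => div_nonneg (sq_nonneg _) (sq_nonneg _)))
    have hsum_ge : ∫ x, φ x^2/‖x - a i‖^2 ∂ν ≤ ∑ j, ∫ x, φ x^2/‖x - a j‖^2 ∂ν := by
      exact Finset.single_le_sum (f := fun j => ∫ x, φ x^2/‖x - a j‖^2 ∂ν)
        (fun j _ => integral_nonneg fun x => div_nonneg (sq_nonneg _) (sq_nonneg _))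
        (Finset.mem_univ i)
    -- final computation
    refine ⟨φ, ⟨L, hL⟩, hsupp, hφ2int, hFpos, hgradint, hHj_int, ?_⟩
    have hcb : 0 < c - b^2 := by linarith
    have hIgt : (C₀ + |lam| * M)/(c - b^2) < I := lt_of_le_of_lt (le_max_right _ _) hI
    have hprod : C₀ + |lam| * M < c*I - b^2*I := by
      have h := (div_lt_iff₀ hcb).1 hIgt
      nlinarith
    have hlamF : -|lam| * (∫ x, φ x^2 ∂ν) ≤ lam * ∫ x, φ x^2 ∂ν :=
      mul_le_mul_of_nonneg_right (neg_abs_le lam) hFpos.le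
    have hlamM : -|lam| * M ≤ -|lam| * ∫ x, φ x^2 ∂ν :=
      mul_le_mul_of_nonpos_left hFleM (neg_nonpos.2 (abs_nonneg lam))
    have hcHi : c * I ≤ c * ∫ x, φ x^2/‖x - a i‖^2 ∂ν :=
      mul_le_mul_of_nonneg_left hHi_ge hc0.le
    have hcsum : c * (∫ x, φ x^2/‖x - a i‖^2 ∂ν) ≤
        c * ∑ j, ∫ x, φ x^2/‖x - a j‖^2 ∂ν :=
      mul_le_mul_of_nonneg_left hsum_ge hc0.le
    linarith

  refine ⟨part1, ?_⟩
  intro K hK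
  obtain ⟨φ, hlip, hsupp, hint2, hpos, hgint, hjint, hlt⟩ := part1 (-K)
  have h := hK φ hlip hsupp
  linarith

end
end
end

section
/- Let a ∈ ℝ^N, let μ : ℝ^N → [0,∞) be locally integrable with dμ := μ(x)dx, let η < 0 and c > η², and assume ∫_{B(a,1)} |x−a|^{2η−2} dμ = +∞. Then ∫_{B(a,1)} (ε+|x−a|)^{2η}·[η²/(ε+|x−a|)² − c/|x−a|²] dμ(x) tends to −∞ as ε → 0⁺; in particular, for every M ∈ ℝ there exists ε_0 > 0 such that the integral is less than −M for all 0 < ε < ε_0. -/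
open MeasureTheory Filter Metric
open scoped ENNReal

noncomputable section

lemma aux_pointwise (η c ε r : ℝ) (hη : η < 0) (hc : η ^ 2 < c) (hε : 0 < ε) (hεr : ε ≤ r) :
    2 ^ (2 * η) * (c - η ^ 2) * r ^ (2 * η - 2) ≤
      (ε + r) ^ (2 * η) * (c / r ^ 2 - η ^ 2 / (ε + r) ^ 2) := by
  have hr : 0 < r := hε.trans_le hεr
  have hεr' : 0 < ε + r := by linarith
  have h1 : 2 ^ (2 * η) * r ^ (2 * η) ≤ (ε + r) ^ (2 * η) := by
    rw [← Real.mul_rpow (by norm_num) hr.le]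
    exact Real.rpow_le_rpow_of_nonpos hεr' (by linarith) (by linarith)
  have h2 : (c - η ^ 2) / r ^ 2 ≤ c / r ^ 2 - η ^ 2 / (ε + r) ^ 2 := by
    have : η ^ 2 / (ε + r) ^ 2 ≤ η ^ 2 / r ^ 2 := by
      gcongr
      linarith
    rw [sub_div]
    linarith
  have hrw : r ^ (2 * η - 2) = r ^ (2 * η) / r ^ 2 := by
    rw [Real.rpow_sub hr, Real.rpow_two]
  rw [hrw]
  calc 2 ^ (2 * η) * (c - η ^ 2) * (r ^ (2 * η) / r ^ 2)
      = (2 ^ (2 * η) * r ^ (2 * η)) * ((c - η ^ 2) / r ^ 2) := by ring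
    _ ≤ (ε + r) ^ (2 * η) * (c / r ^ 2 - η ^ 2 / (ε + r) ^ 2) := by
        apply mul_le_mul h1 h2 (div_nonneg (by linarith) (by positivity)) (Real.rpow_nonneg hεr'.le _)

/-- The key limit in the optimality proof: if `η < 0`, `c > η²` and
`∫_{B(a,1)} |x-a|^{2η-2} dμ = +∞`, then
`∫_{B(a,1)} (ε+|x-a|)^{2η} [η²/(ε+|x-a|)² - c/|x-a|²] dμ → -∞` as `ε → 0⁺`.
Since the integrand is nonpositive, this is expressed by saying that the (Lebesgue)
integral of its negation tends to `∞`; in particular for every `M` the integral of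
the negation eventually exceeds `M`. -/
theorem optimality_integral_blowup {N : ℕ} (a : Euc N)
    (μ : Euc N → ℝ) (hμ0 : ∀ x, 0 ≤ μ x) (hμloc : LocallyIntegrable μ volume)
    (η c : ℝ) (hη : η < 0) (hc : η ^ 2 < c)
    (hdiv : ∫⁻ x in ball a 1, ENNReal.ofReal (‖x - a‖ ^ (2 * η - 2)) ∂(wMeasure μ) = ⊤) :
    Tendsto
      (fun ε : ℝ => ∫⁻ x in ball a 1,
        ENNReal.ofReal ((ε + ‖x - a‖) ^ (2 * η) *
          (c / ‖x - a‖ ^ 2 - η ^ 2 / (ε + ‖x - a‖) ^ 2)) ∂(wMeasure μ))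
      (nhdsWithin 0 (Set.Ioi 0)) (nhds ⊤) ∧
    ∀ M : ℝ, ∃ ε0 > (0 : ℝ), ∀ ε : ℝ, 0 < ε → ε < ε0 →
      ENNReal.ofReal M <
        ∫⁻ x in ball a 1,
          ENNReal.ofReal ((ε + ‖x - a‖) ^ (2 * η) *
            (c / ‖x - a‖ ^ 2 - η ^ 2 / (ε + ‖x - a‖) ^ 2)) ∂(wMeasure μ) := by
  set h : Euc N → ℝ≥0∞ := fun x => ENNReal.ofReal (‖x - a‖ ^ (2 * η - 2)) with hh
  have hmeas : Measurable h := by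
    apply ENNReal.measurable_ofReal.comp
    measurability
  set ν : Measure (Euc N) := (wMeasure μ).withDensity h with hν
  have hν_ball : ν (ball a 1) = ⊤ := by
    rw [hν, withDensity_apply _ measurableSet_ball]; exact hdiv
  set K : ℝ≥0∞ := ENNReal.ofReal (2 ^ (2 * η) * (c - η ^ 2)) with hK
  have hKpos : (0:ℝ) < 2 ^ (2 * η) * (c - η ^ 2) := by
    have : (0:ℝ) < 2 ^ (2*η) := Real.rpow_pos_of_pos (by norm_num) _
    nlinarith
  have hK0 : K ≠ 0 := by simp [hK, ENNReal.ofReal_pos, hKpos]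
  have hKt : K ≠ ⊤ := ENNReal.ofReal_ne_top
  set s : ℕ → Set (Euc N) := fun n => ball a 1 \ ball a (1 / (n + 1)) with hs
  have hsm : ∀ n, MeasurableSet (s n) :=
    fun n => measurableSet_ball.diff measurableSet_ball
  have hmono : Monotone s := by
    intro m n hmn
    apply Set.diff_subset_diff_right
    apply ball_subset_ball
    gcongr
    all_goals first
      | positivity
      | exact_mod_cast Nat.succ_le_succ hmn
  have hunion : ⋃ n, s n = ball a 1 \ {a} := by
    ext x
    simp only [Set.mem_iUnion, hs, Set.mem_diff, Set.mem_singleton_iff, mem_ball]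
    constructor
    · rintro ⟨n, hx, hx'⟩
      refine ⟨hx, fun hxa => hx' ?_⟩
      subst hxa; simp; positivity
    · rintro ⟨hx, hxa⟩
      have hd : 0 < dist x a := dist_pos.mpr hxa
      obtain ⟨n, hn⟩ := exists_nat_one_div_lt hd
      exact ⟨n, hx, fun hlt => absurd hn (not_lt.mpr hlt.le)⟩
  have hνa : ν {a} = 0 := by
    have hha : h a = 0 := by
      simp [hh, Real.zero_rpow (by linarith : 2 * η - 2 ≠ 0)]
    rw [hν, withDensity_apply _ (measurableSet_singleton a), lintegral_singleton, hha,
      zero_mul]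
  have hlim : Tendsto (fun n => ν (s n)) atTop (nhds ⊤) := by
    have := tendsto_measure_iUnion_atTop (μ := ν) hmono
    rw [hunion, measure_diff_null hνa, hν_ball] at this
    exact this
  -- second part first
  have key : ∀ M : ℝ, ∃ ε0 > (0 : ℝ), ∀ ε : ℝ, 0 < ε → ε < ε0 →
      ENNReal.ofReal M <
        ∫⁻ x in ball a 1,
          ENNReal.ofReal ((ε + ‖x - a‖) ^ (2 * η) *
            (c / ‖x - a‖ ^ 2 - η ^ 2 / (ε + ‖x - a‖) ^ 2)) ∂(wMeasure μ) := by
    intro M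
    have hlt : ENNReal.ofReal M / K < ⊤ := by
      exact ENNReal.div_lt_top ENNReal.ofReal_ne_top hK0
    obtain ⟨n, hn⟩ := (hlim.eventually (lt_mem_nhds hlt)).exists
    refine ⟨1 / (n + 1), by positivity, fun ε hε hε0 => ?_⟩
    have hstep0 : ENNReal.ofReal M < K * ν (s n) := by
      rw [mul_comm]
      exact (ENNReal.div_lt_iff (Or.inl hK0) (Or.inl hKt)).mp hn
    have hstep1 : K * ν (s n) ≤ ∫⁻ x in s n,
        ENNReal.ofReal ((ε + ‖x - a‖) ^ (2 * η) *
          (c / ‖x - a‖ ^ 2 - η ^ 2 / (ε + ‖x - a‖) ^ 2)) ∂(wMeasure μ) := by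
      rw [hν, withDensity_apply _ (hsm n), ← lintegral_const_mul _ hmeas]
      apply setLIntegral_mono' (hsm n)
      intro x hx
      have hr : ε ≤ ‖x - a‖ := by
        have : 1 / ((n : ℝ) + 1) ≤ dist x a := by
          have := hx.2
          simpa [mem_ball, not_lt] using this
        rw [dist_eq_norm] at this
        linarith
      rw [hh, ← ENNReal.ofReal_mul hKpos.le]
      exact ENNReal.ofReal_le_ofReal (aux_pointwise η c ε ‖x - a‖ hη hc hε hr)
    have hstep2 : (∫⁻ x in s n,
        ENNReal.ofReal ((ε + ‖x - a‖) ^ (2 * η) *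
          (c / ‖x - a‖ ^ 2 - η ^ 2 / (ε + ‖x - a‖) ^ 2)) ∂(wMeasure μ)) ≤
        ∫⁻ x in ball a 1,
        ENNReal.ofReal ((ε + ‖x - a‖) ^ (2 * η) *
          (c / ‖x - a‖ ^ 2 - η ^ 2 / (ε + ‖x - a‖) ^ 2)) ∂(wMeasure μ) :=
      lintegral_mono_set Set.diff_subset
    exact hstep0.trans_le (hstep1.trans hstep2)
  refine ⟨?_, key⟩
  apply ENNReal.tendsto_nhds_top
  intro m
  obtain ⟨ε0, hε0, hkey⟩ := key m
  filter_upwards [Ioo_mem_nhdsGT hε0] with ε hε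
  have := hkey ε hε.1 hε.2
  rwa [ENNReal.ofReal_natCast] at this

end
end
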